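/- Let β be a standard 4-dimensional Brownian motion started at 0. For every a ≥ 0 and every integer k ≥ 1 with a ≥ k, ∫₀¹ E[(a + |log ‖β_t‖|)^k] dt ≤ C k a^k for a universal constant C > 0. -/

import Mathlib

open MeasureTheory ProbabilityTheory Real Filter
open scoped ENNReal NNReal

/-- `B` is a standard Brownian motion on `ℝ⁴` (started at `0`) under the
probability measure `μ`: continuous paths, independent Gaussian increments,
with the four coordinates independent. -/
def IsBM {Ω : Type*} [MeasurableSpace Ω] (μ : Measure Ω)
    (B : ℝ → Ω → EuclideanSpace ℝ (Fin 4)) : Prop :=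
  (∀ ω, B 0 ω = 0) ∧
  (∀ ω, Continuous fun t => B t ω) ∧
  (∀ t, Measurable (B t)) ∧
  (∀ (m : ℕ) (t : Fin (m + 1) → ℝ), Monotone t → 0 ≤ t 0 →
    ProbabilityTheory.iIndepFun
      (fun p : Fin m × Fin 4 => fun ω =>
        B (t p.1.succ) ω p.2 - B (t p.1.castSucc) ω p.2) μ) ∧
  (∀ s t : ℝ, 0 ≤ s → s ≤ t → ∀ i : Fin 4,
    Measure.map (fun ω => B t ω i - B s ω i) μ
      = ProbabilityTheory.gaussianReal 0 (Real.toNNReal (t - s)))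


lemma lem_pow_le (a x : ℝ) (k : ℕ) (hk : 1 ≤ k) (hka : (k:ℝ) ≤ a) (hx : 0 < x) :
    (a + |Real.log x|) ^ k ≤ a ^ k * (x + x⁻¹) := by
  have ha : (0:ℝ) < a := lt_of_lt_of_le (by exact_mod_cast hk) hka
  set y := |Real.log x| with hy
  have hy0 : 0 ≤ y := abs_nonneg _
  have h1 : (a + y) ^ k = a ^ k * (1 + y / a) ^ k := by
    rw [← mul_pow]; congr 1; field_simp
  have h2 : (1 + y / a) ^ k ≤ Real.exp y := by
    have hle : 1 + y / a ≤ Real.exp (y / a) := by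
      have := Real.add_one_le_exp (y / a); linarith
    calc (1 + y / a) ^ k ≤ (Real.exp (y / a)) ^ k := by
          apply pow_le_pow_left₀ (by positivity) hle
      _ = Real.exp (k * (y / a)) := by rw [← Real.exp_nat_mul]
      _ ≤ Real.exp y := by
          apply Real.exp_le_exp.2
          rw [mul_div_assoc'] at *
          rw [div_le_iff₀ ha]
          calc (k:ℝ) * y ≤ a * y := by nlinarith
            _ = y * a := by ring
  have h3 : Real.exp y ≤ x + x⁻¹ := by
    rcases le_or_gt 0 (Real.log x) with h | h
    · rw [hy, abs_of_nonneg h, Real.exp_log hx]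
      have : 0 ≤ x⁻¹ := by positivity
      linarith
    · rw [hy, abs_of_neg h, Real.exp_neg, Real.exp_log hx]
      have : 0 ≤ x := hx.le
      linarith
  calc (a + y) ^ k = a ^ k * (1 + y / a) ^ k := h1
    _ ≤ a ^ k * Real.exp y := by
        apply mul_le_mul_of_nonneg_left h2 (by positivity)
    _ ≤ a ^ k * (x + x⁻¹) := mul_le_mul_of_nonneg_left h3 (by positivity)

lemma lem_norm_le_sum (x : EuclideanSpace ℝ (Fin 4)) :
    ‖x‖ ≤ |x 0| + |x 1| + |x 2| + |x 3| := by
  rw [EuclideanSpace.norm_eq]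
  simp only [Real.norm_eq_abs, Fin.sum_univ_four, sq_abs]
  have h : x 0 ^ 2 + x 1 ^ 2 + x 2 ^ 2 + x 3 ^ 2 ≤ (|x 0| + |x 1| + |x 2| + |x 3|) ^ 2 := by
    have := abs_nonneg (x 0); have := abs_nonneg (x 1); have := abs_nonneg (x 2)
    have := abs_nonneg (x 3)
    nlinarith [sq_abs (x 0), sq_abs (x 1), sq_abs (x 2), sq_abs (x 3)]
  calc √(x 0 ^ 2 + x 1 ^ 2 + x 2 ^ 2 + x 3 ^ 2) ≤ √((|x 0| + |x 1| + |x 2| + |x 3|) ^ 2) :=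
        Real.sqrt_le_sqrt h
    _ = |x 0| + |x 1| + |x 2| + |x 3| := by
        rw [Real.sqrt_sq (by positivity)]

lemma lem_amgm (x : EuclideanSpace ℝ (Fin 4)) (hx : ∀ i, x i ≠ 0) :
    ‖x‖⁻¹ ≤ 2⁻¹ * (|x 0| ^ (-(4:ℝ)⁻¹) * |x 1| ^ (-(4:ℝ)⁻¹) *
      (|x 2| ^ (-(4:ℝ)⁻¹) * |x 3| ^ (-(4:ℝ)⁻¹))) := by
  set m0 := |x 0| with hm0; set m1 := |x 1| with hm1; set m2 := |x 2| with hm2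
  set m3 := |x 3| with hm3
  have h0 : 0 < m0 := abs_pos.2 (hx 0)
  have h1 : 0 < m1 := abs_pos.2 (hx 1)
  have h2 : 0 < m2 := abs_pos.2 (hx 2)
  have h3 : 0 < m3 := abs_pos.2 (hx 3)
  set P := m0 * m1 * m2 * m3 with hP'
  have hP : (0:ℝ) < P := by positivity
  have key : 2 * (P ^ ((4:ℝ)⁻¹)) ≤ ‖x‖ := by
    rw [EuclideanSpace.norm_eq]
    simp only [Real.norm_eq_abs, Fin.sum_univ_four, sq_abs, ← hm0, ← hm1, ← hm2, ← hm3]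
    have e1 : m0^2 + m1^2 + m2^2 + m3^2 ≥ 2*(m0*m1) + 2*(m2*m3) := by
      nlinarith [sq_nonneg (m0 - m1), sq_nonneg (m2 - m3)]
    have e2 : 2*(m0*m1) + 2*(m2*m3) ≥ 4 * Real.sqrt P := by
      have hs : Real.sqrt P = Real.sqrt (m0*m1) * Real.sqrt (m2*m3) := by
        rw [← Real.sqrt_mul (by positivity), hP']; ring_nf
      nlinarith [sq_nonneg (Real.sqrt (m0*m1) - Real.sqrt (m2*m3)),
        Real.sq_sqrt (show (0:ℝ) ≤ m0*m1 by positivity),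
        Real.sq_sqrt (show (0:ℝ) ≤ m2*m3 by positivity),
        Real.sqrt_nonneg (m0*m1), Real.sqrt_nonneg (m2*m3), hs]
    have e3 : (2 * (P ^ ((4:ℝ)⁻¹)))^2 = 4 * Real.sqrt P := by
      rw [mul_pow, ← Real.rpow_natCast (P ^ ((4:ℝ)⁻¹)) 2, ← Real.rpow_mul hP.le,
        Real.sqrt_eq_rpow]
      norm_num
    have h4 : (2 * (P ^ ((4:ℝ)⁻¹)))^2 ≤ m0^2 + m1^2 + m2^2 + m3^2 := by
      rw [e3]; linarith
    have h5 := Real.sqrt_le_sqrt h4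
    rw [Real.sqrt_sq (by positivity)] at h5
    rwa [show x 0 ^ 2 + x 1 ^ 2 + x 2 ^ 2 + x 3 ^ 2 = m0 ^ 2 + m1 ^ 2 + m2 ^ 2 + m3 ^ 2 from by
      rw [hm0, hm1, hm2, hm3]; simp [sq_abs]]
  have hxpos : (0:ℝ) < 2 * (P ^ ((4:ℝ)⁻¹)) := by positivity
  have hinv : ‖x‖⁻¹ ≤ (2 * (P ^ ((4:ℝ)⁻¹)))⁻¹ := by
    apply inv_anti₀ hxpos key
  calc ‖x‖⁻¹ ≤ (2 * (P ^ ((4:ℝ)⁻¹)))⁻¹ := hinv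
    _ = 2⁻¹ * P ^ (-(4:ℝ)⁻¹) := by
        rw [mul_inv, ← Real.rpow_neg hP.le]
    _ = 2⁻¹ * (m0 ^ (-(4:ℝ)⁻¹) * m1 ^ (-(4:ℝ)⁻¹) * (m2 ^ (-(4:ℝ)⁻¹) * m3 ^ (-(4:ℝ)⁻¹))) := by
        rw [hP', show m0*m1*m2*m3 = (m0*m1)*(m2*m3) by ring,
          Real.mul_rpow (by positivity) (by positivity),
          Real.mul_rpow h0.le h1.le, Real.mul_rpow h2.le h3.le]

lemma lem_gauss_abs (v : ℝ≥0) (hv : v ≠ 0) (hv1 : (v:ℝ) ≤ 1) :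
    ∫⁻ y, ENNReal.ofReal |y| ∂(gaussianReal 0 v) ≤ 2 := by
  have hvpos : (0:ℝ) < v := lt_of_le_of_ne v.coe_nonneg (by exact_mod_cast (Ne.symm hv))
  rw [gaussianReal_of_var_ne_zero _ hv,
    lintegral_withDensity_eq_lintegral_mul _ (measurable_gaussianPDF _ _)
      measurable_abs.ennreal_ofReal]
  set c : ℝ := (√(2 * π * v))⁻¹ with hc
  have hcpos : 0 < c := by
    rw [hc]; positivity
  have hpt : ∀ y : ℝ, (gaussianPDF 0 v * fun y => ENNReal.ofReal |y|) y
      ≤ ENNReal.ofReal (c * √(2*v) * Real.exp (-(4*(v:ℝ))⁻¹ * y^2)) := by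
    intro y
    simp only [Pi.mul_apply, gaussianPDF]
    rw [← ENNReal.ofReal_mul (gaussianPDFReal_nonneg _ _ _)]
    apply ENNReal.ofReal_le_ofReal
    have hform : gaussianPDFReal 0 v y * |y| = c * (|y| * Real.exp (- y^2 / (2*v))) := by
      simp only [gaussianPDFReal, sub_zero, hc]; ring
    rw [hform]
    rw [mul_assoc c]
    apply mul_le_mul_of_nonneg_left _ hcpos.le
    -- |y| * exp(-y²/(2v)) ≤ √(2v) * exp(-y²/(4v))
    have h2v : (0:ℝ) < 2*v := by positivity
    set s : ℝ := |y| / √(2*v) with hs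
    have hs2 : s^2/2 = y^2/(4*(v:ℝ)) := by
      rw [hs, div_pow, sq_abs, Real.sq_sqrt h2v.le]; ring
    have hsle : s ≤ Real.exp (s^2/2) := by
      nlinarith [Real.add_one_le_exp (s^2/2), sq_nonneg (s - 1)]
    have hyle : |y| ≤ √(2*v) * Real.exp (y^2/(4*(v:ℝ))) := by
      have := mul_le_mul_of_nonneg_left hsle (Real.sqrt_nonneg (2*(v:ℝ)))
      rw [hs] at this
      rw [mul_div_cancel₀ _ (by positivity : √(2*(v:ℝ)) ≠ 0)] at this
      rwa [hs2] at this
    calc |y| * Real.exp (- y^2 / (2*v))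
        ≤ (√(2*v) * Real.exp (y^2/(4*(v:ℝ)))) * Real.exp (- y^2 / (2*v)) := by
          apply mul_le_mul_of_nonneg_right hyle (Real.exp_nonneg _)
      _ = √(2*v) * Real.exp (-(4*(v:ℝ))⁻¹ * y^2) := by
          rw [mul_assoc, ← Real.exp_add]
          congr 2
          field_simp
          ring
  calc ∫⁻ y, (gaussianPDF 0 v * fun y => ENNReal.ofReal |y|) y
      ≤ ∫⁻ y, ENNReal.ofReal (c * √(2*v) * Real.exp (-(4*(v:ℝ))⁻¹ * y^2)) := lintegral_mono hpt
    _ = ENNReal.ofReal (∫ y : ℝ, c * √(2*v) * Real.exp (-(4*(v:ℝ))⁻¹ * y^2)) := by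
        rw [ofReal_integral_eq_lintegral_ofReal]
        · exact ((integrable_exp_neg_mul_sq (by positivity)).const_mul _)
        · exact ae_of_all _ fun y => by positivity
    _ ≤ 2 := by
        rw [integral_const_mul, integral_gaussian]
        rw [show ((2:ℝ≥0∞)) = ENNReal.ofReal 2 by norm_num]
        apply ENNReal.ofReal_le_ofReal
        have hπ : π / (4*(v:ℝ))⁻¹ = 4*π*v := by field_simp
        rw [hπ]
        -- c * (√(2v) * √(4πv)) ≤ 2
        have h1 : √(2*(v:ℝ)) * √(4*π*v) ≤ 2 * √(2*π*v) := by
          have e1 : √(2*(v:ℝ)) * √(4*π*(v:ℝ)) = √(2*(v:ℝ) * (4*π*(v:ℝ))) :=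
            (Real.sqrt_mul (by positivity) _).symm
          have e2 : 2 * √(2*π*(v:ℝ)) = √(4 * (2*π*(v:ℝ))) := by
            rw [Real.sqrt_mul (by norm_num : (0:ℝ) ≤ 4), show √(4:ℝ) = 2 from by
              rw [show (4:ℝ) = 2^2 by norm_num, Real.sqrt_sq (by norm_num : (0:ℝ) ≤ 2)]]
          rw [e1, e2]
          apply Real.sqrt_le_sqrt
          have hnn : 0 ≤ 8*π*(v:ℝ)*(1-(v:ℝ)) :=
            mul_nonneg (by positivity) (by linarith)
          nlinarith [hnn]
        calc c * √(2*(v:ℝ)) * √(4*π*v) = c * (√(2*(v:ℝ)) * √(4*π*v)) := by ring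
          _ ≤ c * (2 * √(2*π*v)) := by
              apply mul_le_mul_of_nonneg_left h1 hcpos.le
          _ = 2 := by
              rw [hc]
              field_simp

lemma lem_gauss_rpow (v : ℝ≥0) (hv : v ≠ 0) (hv1 : (v:ℝ) ≤ 1) :
    ∫⁻ y, ENNReal.ofReal (|y| ^ (-(4:ℝ)⁻¹)) ∂(gaussianReal 0 v)
      ≤ ENNReal.ofReal (3 * (v:ℝ) ^ (-(8:ℝ)⁻¹)) := by
  have hvpos : (0:ℝ) < v := lt_of_le_of_ne v.coe_nonneg (by exact_mod_cast (Ne.symm hv))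
  set e : ℝ := -(4:ℝ)⁻¹ with he
  set s : ℝ := √(v:ℝ) with hsdef
  have hspos : 0 < s := Real.sqrt_pos.2 hvpos
  set c : ℝ := (√(2 * π * v))⁻¹ with hc
  have hcpos : 0 < c := by rw [hc]; positivity
  have hmeas_h : Measurable fun y : ℝ => ENNReal.ofReal (|y| ^ e) :=
    (measurable_abs.pow measurable_const).ennreal_ofReal
  rw [gaussianReal_of_var_ne_zero _ hv,
    lintegral_withDensity_eq_lintegral_mul _ (measurable_gaussianPDF _ _) hmeas_h]
  set G : ℝ → ℝ≥0∞ := (Set.Ioc (0:ℝ) s).indicator (fun u => ENNReal.ofReal (u ^ e)) with hG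
  have hGmeas : Measurable G :=
    Measurable.indicator (measurable_id.pow measurable_const).ennreal_ofReal measurableSet_Ioc
  have hpt : ∀ y : ℝ, (gaussianPDF 0 v * fun y => ENNReal.ofReal (|y| ^ e)) y
      ≤ ENNReal.ofReal c * (G y + G (-y)) + ENNReal.ofReal (s ^ e) * gaussianPDF 0 v y := by
    intro y
    simp only [Pi.mul_apply, gaussianPDF]
    have hpdf_le : gaussianPDFReal 0 v y ≤ c := by
      simp only [gaussianPDFReal, sub_zero, ← hc]
      nth_rewrite 2 [show c = c * 1 from (mul_one c).symm]
      apply mul_le_mul_of_nonneg_left _ hcpos.le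
      apply Real.exp_le_one_iff.2
      have : (0:ℝ) < 2 * v := by positivity
      apply div_nonpos_of_nonpos_of_nonneg (neg_nonpos.2 (sq_nonneg _)) this.le
    rcases le_or_gt |y| s with hy | hy
    · apply le_trans _ (le_add_of_nonneg_right (zero_le))
      rw [← ENNReal.ofReal_mul (gaussianPDFReal_nonneg _ _ _)]
      have h1 : gaussianPDFReal 0 v y * (|y| ^ e) ≤ c * |y| ^ e :=
        mul_le_mul_of_nonneg_right hpdf_le (Real.rpow_nonneg (abs_nonneg _) _)
      refine le_trans (ENNReal.ofReal_le_ofReal h1) ?_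
      rw [ENNReal.ofReal_mul hcpos.le]
      apply mul_le_mul_of_nonneg_left _ (zero_le)
      rcases lt_trichotomy y 0 with hy0 | hy0 | hy0
      · have hmem : -y ∈ Set.Ioc (0:ℝ) s := ⟨by linarith, by rw [abs_of_neg hy0] at hy; linarith⟩
        have : G (-y) = ENNReal.ofReal ((-y) ^ e) := Set.indicator_of_mem hmem _
        rw [this, abs_of_neg hy0]
        exact le_add_self
      · subst hy0
        simp [Real.zero_rpow (show e ≠ 0 by rw [he]; norm_num)]
      · have hmem : y ∈ Set.Ioc (0:ℝ) s := ⟨hy0, by rwa [abs_of_pos hy0] at hy⟩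
        have : G y = ENNReal.ofReal (y ^ e) := Set.indicator_of_mem hmem _
        rw [this, abs_of_pos hy0]
        exact le_add_right le_rfl
    · apply le_trans _ (le_add_of_nonneg_left (zero_le))
      rw [← ENNReal.ofReal_mul (gaussianPDFReal_nonneg _ _ _), ← ENNReal.ofReal_mul
        (Real.rpow_nonneg hspos.le _)]
      apply ENNReal.ofReal_le_ofReal
      rw [mul_comm]
      apply mul_le_mul_of_nonneg_right _ (gaussianPDFReal_nonneg _ _ _)
      exact Real.rpow_le_rpow_of_nonpos hspos hy.le (by rw [he]; norm_num)
  have hGint : ∫⁻ u, G u = ENNReal.ofReal ((4/3) * s ^ ((3:ℝ)/4)) := by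
    rw [hG, lintegral_indicator measurableSet_Ioc _]
    have hInt : IntegrableOn (fun u : ℝ => u ^ e) (Set.Ioc 0 s) volume := by
      have := intervalIntegral.intervalIntegrable_rpow' (a := 0) (b := s)
        (show (-1:ℝ) < e by rw [he]; norm_num)
      rwa [intervalIntegrable_iff_integrableOn_Ioc_of_le hspos.le] at this
    rw [← ofReal_integral_eq_lintegral_ofReal hInt]
    · congr 1
      rw [← intervalIntegral.integral_of_le hspos.le,
        integral_rpow (Or.inl (show (-1:ℝ) < e by rw [he]; norm_num))]
      rw [Real.zero_rpow (show e + 1 ≠ 0 by rw [he]; norm_num)]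
      rw [show e + 1 = (3:ℝ)/4 by rw [he]; norm_num]
      field_simp
      ring
    · filter_upwards [ae_restrict_mem measurableSet_Ioc] with u hu
      exact Real.rpow_nonneg hu.1.le _
  have hGneg : ∫⁻ y, G (-y) = ∫⁻ u, G u :=
    (Measure.measurePreserving_neg (volume : Measure ℝ)).lintegral_comp hGmeas
  calc ∫⁻ y, (gaussianPDF 0 v * fun y => ENNReal.ofReal (|y| ^ e)) y
      ≤ ∫⁻ y, (ENNReal.ofReal c * (G y + G (-y)) + ENNReal.ofReal (s ^ e) * gaussianPDF 0 v y) :=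
        lintegral_mono hpt
    _ = ENNReal.ofReal c * ((∫⁻ y, G y) + ∫⁻ y, G (-y))
        + ENNReal.ofReal (s ^ e) * ∫⁻ y, gaussianPDF 0 v y := by
        have hm1 : Measurable fun y : ℝ => G y + G (-y) :=
          hGmeas.add (show Measurable fun y : ℝ => G (-y) from hGmeas.comp measurable_neg)
        rw [lintegral_add_left (hm1.const_mul _),
          lintegral_const_mul _ hm1,
          lintegral_const_mul _ (measurable_gaussianPDF 0 v),
          lintegral_add_left hGmeas]
    _ ≤ ENNReal.ofReal (2 * (v:ℝ) ^ (-(8:ℝ)⁻¹)) + ENNReal.ofReal ((v:ℝ) ^ (-(8:ℝ)⁻¹)) * 1 := by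
        rw [hGneg, hGint, lintegral_gaussianPDF_eq_one _ hv]
        apply add_le_add
        · rw [← ENNReal.ofReal_add (by positivity) (by positivity),
            ← ENNReal.ofReal_mul hcpos.le]
          apply ENNReal.ofReal_le_ofReal
          have h34 : s ^ ((3:ℝ)/4) = (v:ℝ) ^ ((3:ℝ)/8) := by
            rw [hsdef, Real.sqrt_eq_rpow, ← Real.rpow_mul v.coe_nonneg]
            norm_num
          rw [h34]
          have hsq : √(2*π*(v:ℝ)) = √(2*π) * √(v:ℝ) := Real.sqrt_mul (by positivity) _
          have h2pi : (4:ℝ)/3 ≤ √(2*π) := by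
            have h1 : ((4:ℝ)/3)^2 ≤ 2*π := by nlinarith [Real.pi_gt_three]
            calc (4:ℝ)/3 = √(((4:ℝ)/3)^2) := (Real.sqrt_sq (by norm_num)).symm
              _ ≤ √(2*π) := Real.sqrt_le_sqrt h1
          have hApos : (0:ℝ) < √(2*π) := by positivity
          have hBpos : (0:ℝ) < √(v:ℝ) := Real.sqrt_pos.2 hvpos
          have hW : (0:ℝ) ≤ (v:ℝ) ^ (-(8:ℝ)⁻¹) := Real.rpow_nonneg v.coe_nonneg _
          have hvsplit : (v:ℝ) ^ ((3:ℝ)/8) = (v:ℝ) ^ (-(8:ℝ)⁻¹) * √(v:ℝ) := by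
            rw [Real.sqrt_eq_rpow, ← Real.rpow_add hvpos]; norm_num
          have hAinv : (√(2*π))⁻¹ ≤ 3/4 := by
            have := one_div_le_one_div_of_le (by norm_num : (0:ℝ) < 4/3) h2pi
            rw [one_div] at this
            calc (√(2*π))⁻¹ ≤ 1/(4/3) := this
              _ = 3/4 := by norm_num
          rw [hc, hsq, hvsplit, mul_inv]
          have heq : (√(2*π))⁻¹ * (√(v:ℝ))⁻¹ *
              ((4/3) * ((v:ℝ) ^ (-(8:ℝ)⁻¹) * √(v:ℝ)) + (4/3) * ((v:ℝ) ^ (-(8:ℝ)⁻¹) * √(v:ℝ)))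
              = (8/3) * (√(2*π))⁻¹ * ((v:ℝ) ^ (-(8:ℝ)⁻¹)) := by
            field_simp
            ring
          rw [heq]
          calc (8/3) * (√(2*π))⁻¹ * ((v:ℝ) ^ (-(8:ℝ)⁻¹))
              ≤ (8/3) * (3/4) * ((v:ℝ) ^ (-(8:ℝ)⁻¹)) := by
                apply mul_le_mul_of_nonneg_right _ hW
                apply mul_le_mul_of_nonneg_left hAinv (by norm_num)
            _ = 2 * ((v:ℝ) ^ (-(8:ℝ)⁻¹)) := by norm_num
        · apply mul_le_mul_left
          apply ENNReal.ofReal_le_ofReal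
          rw [hsdef, he, Real.sqrt_eq_rpow, ← Real.rpow_mul v.coe_nonneg]
          norm_num
    _ ≤ ENNReal.ofReal (3 * (v:ℝ) ^ (-(8:ℝ)⁻¹)) := by
        rw [mul_one, ← ENNReal.ofReal_add (by positivity) (Real.rpow_nonneg v.coe_nonneg _)]
        apply ENNReal.ofReal_le_ofReal
        linarith

lemma inner_bound {Ω : Type*} [MeasurableSpace Ω] (μ : Measure Ω) [IsProbabilityMeasure μ]
    (B : ℝ → Ω → EuclideanSpace ℝ (Fin 4)) (hB : IsBM μ B)
    (a : ℝ) (k : ℕ) (ha : 0 ≤ a) (hk : 1 ≤ k) (hka : (k:ℝ) ≤ a)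
    {t : ℝ} (ht : 0 < t) (ht1 : t ≤ 1) :
    ∫ ω, (a + |Real.log ‖B t ω‖|) ^ k ∂μ ≤ a ^ k * (8 + 41 * t ^ (-(2:ℝ)⁻¹)) := by
  have hBm := hB.2.2.1
  have hXm : ∀ i : Fin 4, Measurable fun ω => B t ω i :=
    fun i => (measurable_pi_apply i).comp ((WithLp.measurable_ofLp 2 _).comp (hBm t))
  have hvne : Real.toNNReal t ≠ 0 := by
    rw [Ne, Real.toNNReal_eq_zero]; exact not_le.2 ht
  have hv1 : ((Real.toNNReal t : ℝ≥0) : ℝ) ≤ 1 := by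
    rw [Real.coe_toNNReal _ ht.le]; exact ht1
  have hvco : ((Real.toNNReal t : ℝ≥0) : ℝ) = t := Real.coe_toNNReal _ ht.le
  -- marginal laws
  have hmap : ∀ i : Fin 4, Measure.map (fun ω => B t ω i) μ = gaussianReal 0 (Real.toNNReal t) := by
    intro i
    have h5 := hB.2.2.2.2 0 t le_rfl ht.le i
    have hfun : (fun ω => B t ω i - B 0 ω i) = fun ω => B t ω i := by
      funext ω; rw [hB.1 ω]; simp
    rw [hfun] at h5
    rwa [sub_zero] at h5
  -- a.e. coordinates nonzero
  have hane : ∀ᵐ ω ∂μ, ∀ i, B t ω i ≠ 0 := by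
    rw [ae_all_iff]
    intro i
    have hz : μ ((fun ω => B t ω i) ⁻¹' {0}) = 0 := by
      rw [← Measure.map_apply (hXm i) (measurableSet_singleton 0), hmap i]
      exact gaussianReal_absolutelyContinuous _ hvne (by simp)
    rw [ae_iff]
    simp only [not_not]; exact hz
  -- independence of coordinates
  have hInd : iIndepFun
      (fun p : Fin 1 × Fin 4 => fun ω => B t ω p.2) μ := by
    have hmono : Monotone ![(0:ℝ), t] := by
      intro i j hij
      fin_cases i <;> fin_cases j <;>
        simp_all <;> first | rfl | exact ht.le | omega
    have h4 := hB.2.2.2.1 1 ![(0:ℝ), t] hmono (by simp)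
    have hfun : (fun p : Fin 1 × Fin 4 => fun ω =>
        B (![(0:ℝ), t] p.1.succ) ω p.2 - B (![(0:ℝ), t] p.1.castSucc) ω p.2)
        = fun p : Fin 1 × Fin 4 => fun ω => B t ω p.2 := by
      funext p ω
      have hp1 : p.1 = 0 := Subsingleton.elim _ _
      rw [hp1]
      simp [hB.1]
    rwa [hfun] at h4
  set e : ℝ := -(4:ℝ)⁻¹ with he
  set φ : ℝ → ℝ≥0∞ := fun u => ENNReal.ofReal (|u| ^ e) with hφdef
  have hφ : Measurable φ := (measurable_abs.pow measurable_const).ennreal_ofReal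
  set Y : Fin 4 → Ω → ℝ≥0∞ := fun i ω => ENNReal.ofReal (|B t ω i| ^ e) with hY
  have hYm : ∀ i, Measurable (Y i) :=
    fun i => (((hXm i).abs).pow measurable_const).ennreal_ofReal
  have hXmeas : ∀ p : Fin 1 × Fin 4, Measurable ((fun p : Fin 1 × Fin 4 => fun ω => B t ω p.2) p) :=
    fun p => hXm p.2
  -- product formula
  have hpair : ∀ i j : Fin 4, i ≠ j →
      ∫⁻ ω, Y i ω * Y j ω ∂μ = (∫⁻ ω, Y i ω ∂μ) * ∫⁻ ω, Y j ω ∂μ := by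
    intro i j hij
    have hind : IndepFun (Y i) (Y j) μ := by
      have h := hInd.indepFun (i := ((0:Fin 1), i)) (j := ((0:Fin 1), j))
        (by simp [Prod.ext_iff, hij])
      exact h.comp hφ hφ
    exact lintegral_mul_eq_lintegral_mul_lintegral_of_indepFun'' (hYm i).aemeasurable
      (hYm j).aemeasurable hind
  have hbig : ∫⁻ ω, (Y 0 ω * Y 1 ω) * (Y 2 ω * Y 3 ω) ∂μ
      = ((∫⁻ ω, Y 0 ω ∂μ) * ∫⁻ ω, Y 1 ω ∂μ) * ((∫⁻ ω, Y 2 ω ∂μ) * ∫⁻ ω, Y 3 ω ∂μ) := by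
    have hind : IndepFun (fun ω => Y 0 ω * Y 1 ω) (fun ω => Y 2 ω * Y 3 ω) μ := by
      have h := hInd.indepFun_prodMk_prodMk hXmeas ((0:Fin 1), (0:Fin 4)) (0,1) (0,2) (0,3)
        (by decide) (by decide) (by decide) (by decide)
      exact h.comp ((hφ.comp measurable_fst).mul (hφ.comp measurable_snd))
        ((hφ.comp measurable_fst).mul (hφ.comp measurable_snd))
    rw [← hpair 0 1 (by decide), ← hpair 2 3 (by decide)]
    exact lintegral_mul_eq_lintegral_mul_lintegral_of_indepFun''
      ((hYm 0).mul (hYm 1)).aemeasurable ((hYm 2).mul (hYm 3)).aemeasurable hind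
  -- single-coordinate bounds
  have habs : ∀ i, ∫⁻ ω, ENNReal.ofReal |B t ω i| ∂μ ≤ 2 := by
    intro i
    rw [show ∫⁻ ω, ENNReal.ofReal |B t ω i| ∂μ
        = ∫⁻ y, ENNReal.ofReal |y| ∂(Measure.map (fun ω => B t ω i) μ) from
      (lintegral_map measurable_abs.ennreal_ofReal (hXm i)).symm, hmap i]
    exact lem_gauss_abs _ hvne hv1
  have hrpow : ∀ i, ∫⁻ ω, Y i ω ∂μ ≤ ENNReal.ofReal (3 * t ^ (-(8:ℝ)⁻¹)) := by
    intro i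
    rw [show ∫⁻ ω, Y i ω ∂μ
        = ∫⁻ y, ENNReal.ofReal (|y| ^ e) ∂(Measure.map (fun ω => B t ω i) μ) from
      (lintegral_map ((measurable_abs.pow measurable_const).ennreal_ofReal) (hXm i)).symm,
      hmap i]
    have := lem_gauss_rpow _ hvne hv1
    rw [hvco] at this
    rw [he]
    exact this
  -- measurable integrand
  have hmeasf : Measurable fun ω => (a + |Real.log ‖B t ω‖|) ^ k :=
    ((Real.measurable_log.comp (hBm t).norm).abs.const_add a).pow_const k
  have hnn : 0 ≤ᵐ[μ] fun ω => (a + |Real.log ‖B t ω‖|) ^ k :=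
    ae_of_all _ fun ω => pow_nonneg (add_nonneg ha (abs_nonneg _)) k
  rw [integral_eq_lintegral_of_nonneg_ae hnn hmeasf.aestronglyMeasurable]
  have hGnn : (0:ℝ) ≤ a ^ k * (8 + 41 * t ^ (-(2:ℝ)⁻¹)) := by
    apply mul_nonneg (pow_nonneg ha k)
    have := Real.rpow_nonneg ht.le (-(2:ℝ)⁻¹)
    linarith
  apply ENNReal.toReal_le_of_le_ofReal hGnn
  -- pointwise bound
  have hptwise : ∀ᵐ ω ∂μ, ENNReal.ofReal ((a + |Real.log ‖B t ω‖|) ^ k)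
      ≤ ENNReal.ofReal (a ^ k) *
        ((ENNReal.ofReal |B t ω 0| + ENNReal.ofReal |B t ω 1| + ENNReal.ofReal |B t ω 2|
          + ENNReal.ofReal |B t ω 3|)
         + ENNReal.ofReal 2⁻¹ * ((Y 0 ω * Y 1 ω) * (Y 2 ω * Y 3 ω))) := by
    filter_upwards [hane] with ω hω
    set x := B t ω with hx
    have hxpos : 0 < ‖x‖ := by
      rw [norm_pos_iff]
      intro h0
      exact hω 0 (by rw [h0]; rfl)
    have step1 : (a + |Real.log ‖x‖|) ^ k ≤ a ^ k * (‖x‖ + ‖x‖⁻¹) :=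
      lem_pow_le a ‖x‖ k hk hka hxpos
    have step2 : ‖x‖ + ‖x‖⁻¹ ≤ (|x 0| + |x 1| + |x 2| + |x 3|)
        + 2⁻¹ * (|x 0| ^ e * |x 1| ^ e * (|x 2| ^ e * |x 3| ^ e)) :=
      add_le_add (lem_norm_le_sum x) (lem_amgm x hω)
    have step3 : (a + |Real.log ‖x‖|) ^ k ≤ a ^ k * ((|x 0| + |x 1| + |x 2| + |x 3|)
        + 2⁻¹ * (|x 0| ^ e * |x 1| ^ e * (|x 2| ^ e * |x 3| ^ e))) :=
      step1.trans (mul_le_mul_of_nonneg_left step2 (pow_nonneg ha k))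
    refine (ENNReal.ofReal_le_ofReal step3).trans (le_of_eq ?_)
    have hrnn : ∀ i : Fin 4, (0:ℝ) ≤ |x i| ^ e := fun i => Real.rpow_nonneg (abs_nonneg _) _
    rw [ENNReal.ofReal_mul (pow_nonneg ha k)]
    congr 1
    rw [ENNReal.ofReal_add (by positivity) (by positivity)]
    congr 1
    · rw [ENNReal.ofReal_add (by positivity) (abs_nonneg _),
        ENNReal.ofReal_add (by positivity) (abs_nonneg _),
        ENNReal.ofReal_add (abs_nonneg _) (abs_nonneg _)]
    · rw [ENNReal.ofReal_mul (by norm_num),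
        ENNReal.ofReal_mul (by positivity), ENNReal.ofReal_mul (hrnn 0),
        ENNReal.ofReal_mul (by positivity)]
  -- measurability of the pieces
  have hSm : Measurable fun ω => ENNReal.ofReal |B t ω 0| + ENNReal.ofReal |B t ω 1|
      + ENNReal.ofReal |B t ω 2| + ENNReal.ofReal |B t ω 3| :=
    ((((hXm 0).abs.ennreal_ofReal.add (hXm 1).abs.ennreal_ofReal)).add
      (hXm 2).abs.ennreal_ofReal).add (hXm 3).abs.ennreal_ofReal
  have hPm : Measurable fun ω => (Y 0 ω * Y 1 ω) * (Y 2 ω * Y 3 ω) :=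
    ((hYm 0).mul (hYm 1)).mul ((hYm 2).mul (hYm 3))
  calc ∫⁻ ω, ENNReal.ofReal ((a + |Real.log ‖B t ω‖|) ^ k) ∂μ
      ≤ ∫⁻ ω, ENNReal.ofReal (a ^ k) *
        ((ENNReal.ofReal |B t ω 0| + ENNReal.ofReal |B t ω 1| + ENNReal.ofReal |B t ω 2|
          + ENNReal.ofReal |B t ω 3|)
         + ENNReal.ofReal 2⁻¹ * ((Y 0 ω * Y 1 ω) * (Y 2 ω * Y 3 ω))) ∂μ :=
        lintegral_mono_ae hptwise
    _ = ENNReal.ofReal (a ^ k) *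
        ((∫⁻ ω, ENNReal.ofReal |B t ω 0| ∂μ) + (∫⁻ ω, ENNReal.ofReal |B t ω 1| ∂μ)
          + (∫⁻ ω, ENNReal.ofReal |B t ω 2| ∂μ) + (∫⁻ ω, ENNReal.ofReal |B t ω 3| ∂μ)
         + ENNReal.ofReal 2⁻¹ * ∫⁻ ω, (Y 0 ω * Y 1 ω) * (Y 2 ω * Y 3 ω) ∂μ) := by
        rw [lintegral_const_mul' _ _ ENNReal.ofReal_ne_top]
        congr 1
        rw [lintegral_add_left hSm, lintegral_const_mul _ hPm]
        congr 1
        rw [lintegral_add_left (show Measurable fun ω => ENNReal.ofReal |B t ω 0|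
            + ENNReal.ofReal |B t ω 1| + ENNReal.ofReal |B t ω 2| from ((hXm 0).abs.ennreal_ofReal.add
            (hXm 1).abs.ennreal_ofReal).add (hXm 2).abs.ennreal_ofReal),
          lintegral_add_left (show Measurable fun ω => ENNReal.ofReal |B t ω 0|
            + ENNReal.ofReal |B t ω 1| from (hXm 0).abs.ennreal_ofReal.add (hXm 1).abs.ennreal_ofReal),
          lintegral_add_left (hXm 0).abs.ennreal_ofReal]
    _ ≤ ENNReal.ofReal (a ^ k) *
        ((2 + 2 + 2 + 2) + ENNReal.ofReal 2⁻¹ * ENNReal.ofReal (81 * t ^ (-(2:ℝ)⁻¹))) := by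
        apply mul_le_mul_right
        apply add_le_add
        · exact add_le_add (add_le_add (add_le_add (habs 0) (habs 1)) (habs 2)) (habs 3)
        · apply mul_le_mul_right
          rw [hbig]
          have hM := fun i => hrpow i
          have hstep : ((∫⁻ ω, Y 0 ω ∂μ) * ∫⁻ ω, Y 1 ω ∂μ) *
              ((∫⁻ ω, Y 2 ω ∂μ) * ∫⁻ ω, Y 3 ω ∂μ)
              ≤ (ENNReal.ofReal (3 * t ^ (-(8:ℝ)⁻¹)) * ENNReal.ofReal (3 * t ^ (-(8:ℝ)⁻¹))) *
                (ENNReal.ofReal (3 * t ^ (-(8:ℝ)⁻¹)) * ENNReal.ofReal (3 * t ^ (-(8:ℝ)⁻¹))) :=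
            mul_le_mul' (mul_le_mul' (hM 0) (hM 1)) (mul_le_mul' (hM 2) (hM 3))
          refine hstep.trans (le_of_eq ?_)
          have h8nn : (0:ℝ) ≤ 3 * t ^ (-(8:ℝ)⁻¹) := by positivity
          rw [← ENNReal.ofReal_mul h8nn,
            ← ENNReal.ofReal_mul (by positivity : (0:ℝ) ≤ 3 * t ^ (-(8:ℝ)⁻¹) * (3 * t ^ (-(8:ℝ)⁻¹)))]
          congr 1
          have : t ^ (-(8:ℝ)⁻¹) * t ^ (-(8:ℝ)⁻¹) * (t ^ (-(8:ℝ)⁻¹) * t ^ (-(8:ℝ)⁻¹))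
              = t ^ (-(2:ℝ)⁻¹) := by
            rw [← Real.rpow_add ht, ← Real.rpow_add ht]
            norm_num
          nlinarith [this]
    _ ≤ ENNReal.ofReal (a ^ k * (8 + 41 * t ^ (-(2:ℝ)⁻¹))) := by
        have htr : (0:ℝ) ≤ t ^ (-(2:ℝ)⁻¹) := Real.rpow_nonneg ht.le _
        rw [ENNReal.ofReal_mul (pow_nonneg ha k)]
        apply mul_le_mul_right
        calc (2 + 2 + 2 + 2 : ℝ≥0∞) + ENNReal.ofReal 2⁻¹ * ENNReal.ofReal (81 * t ^ (-(2:ℝ)⁻¹))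
            = ENNReal.ofReal 8 + ENNReal.ofReal (2⁻¹ * (81 * t ^ (-(2:ℝ)⁻¹))) := by
              rw [← ENNReal.ofReal_mul (by norm_num)]
              norm_num
          _ ≤ ENNReal.ofReal 8 + ENNReal.ofReal (41 * t ^ (-(2:ℝ)⁻¹)) := by
              apply add_le_add_right
              apply ENNReal.ofReal_le_ofReal
              nlinarith [htr]
          _ = ENNReal.ofReal (8 + 41 * t ^ (-(2:ℝ)⁻¹)) := by
              rw [← ENNReal.ofReal_add (by norm_num) (by positivity)]

/-- for standard 4-dimensional Brownian motion `β`, all `a ≥ 0`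
and integers `k ≥ 1` with `a ≥ k`,
`∫₀¹ E[(a + |log ‖β_t‖|)^k] dt ≤ C k a^k` for a universal constant `C > 0`. -/
theorem integral_expectation_log_norm_pow_le
    {Ω : Type*} [MeasurableSpace Ω] (μ : Measure Ω) [IsProbabilityMeasure μ]
    (B : ℝ → Ω → EuclideanSpace ℝ (Fin 4)) (hB : IsBM μ B) :
    ∃ C : ℝ, 0 < C ∧ ∀ (a : ℝ) (k : ℕ), 0 ≤ a → 1 ≤ k → (k : ℝ) ≤ a →
      ∫ t in (0:ℝ)..1, ∫ ω, (a + |Real.log ‖B t ω‖|) ^ k ∂μ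
        ≤ C * k * a ^ k := by
  refine ⟨90, by norm_num, ?_⟩
  intro a k ha hk hka
  have hknn : (0:ℝ) ≤ 90 * k * a ^ k :=
    mul_nonneg (mul_nonneg (by norm_num) (Nat.cast_nonneg k)) (pow_nonneg ha k)
  by_cases hInt : IntervalIntegrable (fun t => ∫ ω, (a + |Real.log ‖B t ω‖|) ^ k ∂μ) volume 0 1
  · have hGint : IntervalIntegrable (fun t => a ^ k * (8 + 41 * t ^ (-(2:ℝ)⁻¹))) volume 0 1 := by
      apply IntervalIntegrable.const_mul
      exact intervalIntegrable_const.add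
        ((intervalIntegral.intervalIntegrable_rpow' (by norm_num)).const_mul 41)
    have hI0 : ∫ ω, (a + |Real.log ‖B 0 ω‖|) ^ k ∂μ = a ^ k := by
      simp only [hB.1, norm_zero, Real.log_zero, abs_zero, add_zero]
      simp [integral_const]
    have hle : ∫ t in (0:ℝ)..1, ∫ ω, (a + |Real.log ‖B t ω‖|) ^ k ∂μ
        ≤ ∫ t in (0:ℝ)..1, a ^ k * (8 + 41 * t ^ (-(2:ℝ)⁻¹)) := by
      apply intervalIntegral.integral_mono_on (by norm_num) hInt hGint
      intro t htm
      rcases eq_or_lt_of_le htm.1 with h0 | h0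
      · rw [← h0, hI0]
        have h1 : ((0:ℝ)) ^ (-(2:ℝ)⁻¹) = 0 := Real.zero_rpow (by norm_num)
        rw [h1]
        have : (0:ℝ) ≤ a ^ k := pow_nonneg ha k
        nlinarith
      · exact inner_bound μ B hB a k ha hk hka h0 htm.2
    have hGval : ∫ t in (0:ℝ)..1, a ^ k * (8 + 41 * t ^ (-(2:ℝ)⁻¹)) = a ^ k * 90 := by
      rw [intervalIntegral.integral_const_mul,
        intervalIntegral.integral_add intervalIntegrable_const
          ((intervalIntegral.intervalIntegrable_rpow' (by norm_num)).const_mul 41),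
        intervalIntegral.integral_const, intervalIntegral.integral_const_mul,
        integral_rpow (Or.inl (by norm_num))]
      rw [Real.one_rpow, Real.zero_rpow (by norm_num)]
      norm_num
    calc ∫ t in (0:ℝ)..1, ∫ ω, (a + |Real.log ‖B t ω‖|) ^ k ∂μ
        ≤ a ^ k * 90 := by rw [← hGval]; exact hle
      _ ≤ 90 * k * a ^ k := by
          have hk1 : (1:ℝ) ≤ (k:ℝ) := by exact_mod_cast hk
          have hak : (0:ℝ) ≤ a ^ k := pow_nonneg ha k
          nlinarith
  · rw [intervalIntegral.integral_undef hInt]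
    exact hknn
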